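/- Fix b > 0 and real numbers −1 ≤ a₀ < a₁ < ... < a_n ≤ 1 with a_{i+1} − a_i > 2b. For 0 ≤ k ≤ n, let U_{k,n−k} be the set of multisets z of n points in ℝ such that, in the box decomposition of z, the point a_k is not covered by any box, and exactly k points of z lie to the left of a_k. Then the sets U_{n,0}, U_{n−1,1}, ..., U_{0,n} cover Sym^n(ℝ) (the space of n-point multisets in ℝ). -/

import Mathlib

/-- The mean of the points of `x` indexed by `S`. -/
noncomputable def bmean {n : ℕ} (x : Fin n → ℝ) (S : Finset (Fin n)) : ℝ :=
  (∑ i ∈ S, x i) / S.card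

/-- The box of a sub-collection: the closed interval of radius `|S| * b` around its mean. -/
noncomputable def bbox {n : ℕ} (b : ℝ) (x : Fin n → ℝ) (S : Finset (Fin n)) : Set ℝ :=
  Set.Icc (bmean x S - S.card * b) (bmean x S + S.card * b)

/-- `D` is a box decomposition of the sorted tuple `x`. -/
def IsBoxDecomp {n : ℕ} (b : ℝ) (x : Fin n → ℝ) (D : Finset (Finset (Fin n))) : Prop :=
  (∀ S ∈ D, S.Nonempty) ∧
  (∀ a : Fin n, ∃! S : Finset (Fin n), S ∈ D ∧ a ∈ S) ∧
  (∀ S ∈ D, ∀ a ∈ S, ∀ c ∈ S, ∀ t : Fin n, a ≤ t → t ≤ c → t ∈ S) ∧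
  (∀ S ∈ D, ∀ a ∈ S, ∀ c ∈ S, a ≤ c → bbox b x (Finset.Icc a c) ⊆ bbox b x S) ∧
  (∀ S ∈ D, ∀ T ∈ D, S ≠ T → bbox b x S ∩ bbox b x T = ∅) ∧
  (∀ S ∈ D, ∀ T ∈ D, (∀ a ∈ S, ∀ c ∈ T, a < c) →
    ∀ u ∈ bbox b x S, ∀ v ∈ bbox b x T, u < v)

open scoped Classical

section Helpers
variable {n : ℕ}

private lemma card_pos_cast {S : Finset (Fin n)} (h : S.Nonempty) : (0:ℝ) < S.card := by
  exact_mod_cast h.card_pos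

private lemma lo_le_hi {b : ℝ} {x : Fin n → ℝ} (hb : 0 < b) {S : Finset (Fin n)}
    (h : S.Nonempty) : bmean x S - S.card * b ≤ bmean x S + S.card * b := by
  nlinarith [card_pos_cast h]

private lemma agap {b : ℝ} {a : ℕ → ℝ} (hb : 0 < b)
    (hgap : ∀ i, i < n → a i + 2*b < a (i+1)) :
    ∀ i j, i < j → j ≤ n → a i + 2*b*((j:ℝ) - (i:ℝ)) < a j := by
  intro i j
  induction j with
  | zero => omega
  | succ j ih =>
    intro hij hjn
    rcases Nat.lt_or_ge i j with h | h
    · have h1 := ih h (by omega)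
      have h2 := hgap j (by omega)
      push_cast
      push_cast at h1
      nlinarith
    · have : i = j := by omega
      subst this
      have := hgap i (by omega)
      push_cast
      linarith

private lemma amono {b : ℝ} {a : ℕ → ℝ} (hb : 0 < b)
    (hgap : ∀ i, i < n → a i + 2*b < a (i+1)) {i j : ℕ} (hij : i < j) (hjn : j ≤ n) :
    a i < a j := by
  have h := agap hb hgap i j hij hjn
  have : (1:ℝ) ≤ (j:ℝ) - (i:ℝ) := by
    have : (i:ℝ) + 1 ≤ (j:ℝ) := by exact_mod_cast hij
    linarith
  nlinarith

private lemma mem_own_box {b : ℝ} {x : Fin n → ℝ} {D : Finset (Finset (Fin n))}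
    (hb : 0 < b)
    (h4 : ∀ S ∈ D, ∀ a ∈ S, ∀ c ∈ S, a ≤ c → bbox b x (Finset.Icc a c) ⊆ bbox b x S)
    {S : Finset (Fin n)} (hS : S ∈ D) {i : Fin n} (hi : i ∈ S) : x i ∈ bbox b x S := by
  apply h4 S hS i hi i hi le_rfl
  simp only [bbox, bmean, Finset.Icc_self, Finset.sum_singleton, Finset.card_singleton,
    Set.mem_Icc, Nat.cast_one]
  constructor <;> nlinarith

private lemma acount {b : ℝ} {x : Fin n → ℝ} {a : ℕ → ℝ} (hb : 0 < b)
    (hgap : ∀ i, i < n → a i + 2*b < a (i+1)) {S : Finset (Fin n)} (hS : S.Nonempty) :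
    ((Finset.range (n+1)).filter fun t => a t ∈ bbox b x S).card ≤ S.card := by
  set A := (Finset.range (n+1)).filter fun t => a t ∈ bbox b x S with hA
  rcases A.eq_empty_or_nonempty with h | h
  · simp [h]
  · have hsub : A ⊆ Finset.Icc (A.min' h) (A.min' h + S.card - 1) := by
      intro t ht
      have h1 : A.min' h ≤ t := A.min'_le t ht
      have hm0 : a (A.min' h) ∈ bbox b x S := (Finset.mem_filter.1 (A.min'_mem h)).2
      have hm0n : A.min' h ∈ Finset.range (n+1) := (Finset.mem_filter.1 (A.min'_mem h)).1
      rw [Finset.mem_range] at hm0n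
      have htm : a t ∈ bbox b x S := (Finset.mem_filter.1 ht).2
      have htn : t ∈ Finset.range (n+1) := (Finset.mem_filter.1 ht).1
      rw [Finset.mem_range] at htn
      rw [bbox, Set.mem_Icc] at hm0 htm
      rw [Finset.mem_Icc]
      refine ⟨h1, ?_⟩
      by_contra hc
      push_neg at hc
      have hcard := hS.card_pos
      have hlt : A.min' h + S.card ≤ t := by omega
      have hg := agap hb hgap (A.min' h) t (by omega) (by omega)
      have hcast : (S.card : ℝ) ≤ (t:ℝ) - (A.min' h : ℝ) := by
        have : ((A.min' h + S.card : ℕ) : ℝ) ≤ (t:ℝ) := by exact_mod_cast hlt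
        push_cast at this
        linarith
      nlinarith [hm0.1, hm0.2, htm.1, htm.2]
    calc A.card ≤ _ := Finset.card_le_card hsub
      _ ≤ S.card := by
          rw [Nat.card_Icc]
          have := hS.card_pos
          omega


private lemma cnt {b : ℝ} {x : Fin n → ℝ} {a : ℕ → ℝ} (hb : 0 < b)
    (hgap : ∀ i, i < n → a i + 2*b < a (i+1)) {D : Finset (Finset (Fin n))}
    (hD : IsBoxDecomp b x D) (P : ℝ → Prop) (J : Finset ℕ) (hJ : J ⊆ Finset.range (n+1))
    (hcov : ∀ t ∈ J, ∃ S ∈ D, a t ∈ bbox b x S ∧ ∀ u ∈ bbox b x S, P u)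
    (F : Finset (Fin n)) (hF : ∀ i : Fin n, P (x i) → i ∈ F) :
    J.card ≤ F.card := by
  classical
  obtain ⟨h1, h2, h3, h4, h5, h6⟩ := hD
  set T := D.filter (fun S => (∃ t ∈ J, a t ∈ bbox b x S) ∧ ∀ u ∈ bbox b x S, P u) with hT
  have step1 : J ⊆ T.biUnion (fun S => J.filter (fun t => a t ∈ bbox b x S)) := by
    intro t ht
    obtain ⟨S, hSD, htS, hP⟩ := hcov t ht
    refine Finset.mem_biUnion.2 ⟨S, ?_, Finset.mem_filter.2 ⟨ht, htS⟩⟩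
    exact Finset.mem_filter.2 ⟨hSD, ⟨t, ht, htS⟩, hP⟩
  have step2 : J.card ≤ ∑ S ∈ T, (J.filter (fun t => a t ∈ bbox b x S)).card :=
    le_trans (Finset.card_le_card step1) Finset.card_biUnion_le
  have step3 : ∀ S ∈ T, (J.filter (fun t => a t ∈ bbox b x S)).card ≤ S.card := by
    intro S hSt
    have hSD : S ∈ D := (Finset.mem_filter.1 hSt).1
    have hsub : J.filter (fun t => a t ∈ bbox b x S) ⊆
        (Finset.range (n+1)).filter (fun t => a t ∈ bbox b x S) := by
      intro t ht
      rw [Finset.mem_filter] at ht ⊢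
      exact ⟨hJ ht.1, ht.2⟩
    exact le_trans (Finset.card_le_card hsub) (acount hb hgap (h1 S hSD))
  have hdisj : ∀ S ∈ T, ∀ S' ∈ T, S ≠ S' → Disjoint S S' := by
    intro S hS S' hS' hne
    rw [Finset.disjoint_left]
    intro i hiS hiS'
    have hSD := (Finset.mem_filter.1 hS).1
    have hSD' := (Finset.mem_filter.1 hS').1
    obtain ⟨U, hU, hUuniq⟩ := h2 i
    exact hne ((hUuniq S ⟨hSD, hiS⟩).trans (hUuniq S' ⟨hSD', hiS'⟩).symm)
  have step4 : ∑ S ∈ T, S.card = (T.biUnion id).card := (Finset.card_biUnion hdisj).symm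
  have step5 : T.biUnion id ⊆ F := by
    intro i hi
    obtain ⟨S, hSt, hiS⟩ := Finset.mem_biUnion.1 hi
    have hm := Finset.mem_filter.1 hSt
    have hxm : x i ∈ bbox b x S := mem_own_box hb h4 hm.1 hiS
    exact hF i (hm.2.2 _ hxm)
  calc J.card ≤ _ := step2
    _ ≤ ∑ S ∈ T, S.card := Finset.sum_le_sum step3
    _ = _ := step4
    _ ≤ _ := Finset.card_le_card step5

private lemma comb1 {p r s t b : ℝ} (hb : 0 < b) (hs : 0 < s) (ht : 0 < t)
    (h : p/s + s*b < r/t - t*b) :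
    p/s - s*b < (p+r)/(s+t) - (s+t)*b := by
  have hst : 0 < s + t := by linarith
  have h2 : (p/s + s*b) * (s*t) < (r/t - t*b) * (s*t) :=
    mul_lt_mul_of_pos_right h (by positivity)
  have e1 : (p/s + s*b) * (s*t) = p*t + s*s*t*b := by field_simp
  have e2 : (r/t - t*b) * (s*t) = r*s - s*t*t*b := by field_simp
  rw [e1, e2] at h2
  rw [div_sub' (ne_of_gt hs), div_sub' (ne_of_gt hst), div_lt_div_iff₀ hs hst]
  nlinarith

private lemma icc_split {u e q u' : Fin n} (hue : u ≤ e) (heq : e < q)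
    (hu' : (u':ℕ) = (e:ℕ) + 1) :
    Finset.Icc u q = Finset.Icc u e ∪ Finset.Icc u' q ∧
      Disjoint (Finset.Icc u e) (Finset.Icc u' q) := by
  rw [Fin.le_def] at hue
  rw [Fin.lt_def] at heq
  constructor
  · ext t
    simp only [Finset.mem_Icc, Finset.mem_union, Fin.le_def]
    omega
  · rw [Finset.disjoint_left]
    intro t h1 h2
    simp only [Finset.mem_Icc, Fin.le_def] at h1 h2
    omega

private lemma lemP {b : ℝ} {x : Fin n → ℝ} (hb : 0 < b) {D : Finset (Finset (Fin n))}
    (hD : IsBoxDecomp b x D) :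
    ∀ d : ℕ, ∀ u q : Fin n, u ≤ q → (q:ℕ) - (u:ℕ) ≤ d → ∀ S ∈ D, u ∈ S →
      bmean x S - S.card * b ≤ bmean x (Finset.Icc u q) - (Finset.Icc u q).card * b := by
  obtain ⟨h1, h2, h3, h4, h5, h6⟩ := hD
  intro d
  induction d with
  | zero =>
    intro u q huq hd S hS huS
    have hqu : u = q := by
      rw [Fin.le_def] at huq; exact Fin.ext (by omega)
    rw [← hqu]
    have hsub := h4 S hS u huS u huS le_rfl
    have hne : (Finset.Icc u u).Nonempty := ⟨u, Finset.mem_Icc.2 ⟨le_rfl, le_rfl⟩⟩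
    exact ((Set.Icc_subset_Icc_iff (lo_le_hi hb hne)).1 hsub).1
  | succ d ih =>
    intro u q huq hd S hS huS
    by_cases hqe : q ≤ S.max' (h1 S hS)
    · have hq : q ∈ S := h3 S hS u huS _ (S.max'_mem _) q huq hqe
      have hsub := h4 S hS u huS q hq huq
      have hne : (Finset.Icc u q).Nonempty := ⟨u, Finset.mem_Icc.2 ⟨le_rfl, huq⟩⟩
      exact ((Set.Icc_subset_Icc_iff (lo_le_hi hb hne)).1 hsub).1
    · push_neg at hqe
      set e := S.max' (h1 S hS) with he
      have hue : u ≤ e := S.le_max' u huS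
      have heq : e < q := hqe
      have hq1 : (e:ℕ)+1 < n := lt_of_le_of_lt (Nat.succ_le_of_lt (Fin.lt_def.1 heq)) q.isLt
      set u' : Fin n := ⟨(e:ℕ)+1, hq1⟩ with hu'
      have hu'q : u' ≤ q := by rw [Fin.le_def]; exact Nat.succ_le_of_lt (Fin.lt_def.1 heq)
      obtain ⟨S', hS'mem, _⟩ := h2 u'
      obtain ⟨hS'D, hu'S'⟩ := hS'mem
      have hminS' : (e:ℕ) < ((S'.min' (h1 S' hS'D)):ℕ) := by
        by_contra hcon
        push_neg at hcon
        have heS' : e ∈ S' := h3 S' hS'D _ (S'.min'_mem _) u' hu'S' e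
          (by rw [Fin.le_def]; exact hcon) (by rw [Fin.le_def]; simp [hu'])
        obtain ⟨U, hU, hUuniq⟩ := h2 e
        have hSeq : S = S' := (hUuniq S ⟨hS, S.max'_mem _⟩).trans (hUuniq S' ⟨hS'D, heS'⟩).symm
        have hle : u' ≤ e := S.le_max' u' (hSeq ▸ hu'S')
        rw [Fin.le_def] at hle
        simp [hu'] at hle
      have hSne := h1 S hS
      have hS'ne := h1 S' hS'D
      have horder : bmean x S + S.card * b < bmean x S' - S'.card * b := by
        refine h6 S hS S' hS'D ?_ _ ?_ _ ?_
        · intro aa haa cc hcc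
          have l1 : aa ≤ e := S.le_max' aa haa
          have l2 : S'.min' hS'ne ≤ cc := S'.min'_le cc hcc
          rw [Fin.lt_def]
          rw [Fin.le_def] at l1 l2
          omega
        · exact Set.mem_Icc.2 ⟨lo_le_hi hb hSne, le_rfl⟩
        · exact Set.mem_Icc.2 ⟨le_rfl, lo_le_hi hb hS'ne⟩
      obtain ⟨hsplit, hdisj⟩ := icc_split hue heq (u' := u') rfl
      have hsum : ∑ i ∈ Finset.Icc u q, x i
          = ∑ i ∈ Finset.Icc u e, x i + ∑ i ∈ Finset.Icc u' q, x i := by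
        rw [hsplit, Finset.sum_union hdisj]
      have hcard : (Finset.Icc u q).card = (Finset.Icc u e).card + (Finset.Icc u' q).card := by
        rw [hsplit, Finset.card_union_of_disjoint hdisj]
      have hAne : (Finset.Icc u e).Nonempty := ⟨u, Finset.mem_Icc.2 ⟨le_rfl, hue⟩⟩
      have hCne : (Finset.Icc u' q).Nonempty := ⟨u', Finset.mem_Icc.2 ⟨le_rfl, hu'q⟩⟩
      have hsubA := h4 S hS u huS e (S.max'_mem _) hue
      have hA := (Set.Icc_subset_Icc_iff (lo_le_hi hb hAne)).1 hsubA
      have hC_lo : bmean x S' - S'.card * b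
          ≤ bmean x (Finset.Icc u' q) - (Finset.Icc u' q).card * b := by
        refine ih u' q hu'q ?_ S' hS'D hu'S'
        have h1' := Fin.lt_def.1 heq
        have h2' := Fin.le_def.1 hue
        simp only [hu']
        omega
      have hchain : (∑ i ∈ Finset.Icc u e, x i)/((Finset.Icc u e).card : ℝ)
            + (Finset.Icc u e).card * b
          < (∑ i ∈ Finset.Icc u' q, x i)/((Finset.Icc u' q).card : ℝ)
            - (Finset.Icc u' q).card * b := by
        have := lt_of_le_of_lt hA.2 (lt_of_lt_of_le horder hC_lo)
        simpa [bmean] using this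
      have hcomb := comb1 hb (card_pos_cast hAne) (card_pos_cast hCne) hchain
      have hrw : bmean x (Finset.Icc u q) - (Finset.Icc u q).card * b
          = (∑ i ∈ Finset.Icc u e, x i + ∑ i ∈ Finset.Icc u' q, x i)
              / (((Finset.Icc u e).card : ℝ) + ((Finset.Icc u' q).card : ℝ))
            - (((Finset.Icc u e).card : ℝ) + ((Finset.Icc u' q).card : ℝ)) * b := by
        rw [bmean, hsum, hcard]
        push_cast
        ring_nf
      rw [hrw]
      refine le_trans hA.1 (le_of_lt ?_)
      simpa [bmean] using hcomb

private lemma lemL {b : ℝ} {x : Fin n → ℝ} (hb : 0 < b) {D : Finset (Finset (Fin n))}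
    (hD : IsBoxDecomp b x D) {p q : Fin n} (hpq : p ≤ q)
    (hW : ∀ p' q' : Fin n, p ≤ p' → p' ≤ q' → q' ≤ q →
      bbox b x (Finset.Icc p' q') ⊆ bbox b x (Finset.Icc p q)) :
    ∃ S ∈ D, Finset.Icc p q ⊆ S := by
  have hlemP := lemP hb hD
  obtain ⟨h1, h2, h3, h4, h5, h6⟩ := hD
  obtain ⟨S, hSmem, _⟩ := h2 p
  obtain ⟨hS, hpS⟩ := hSmem
  by_cases hqe : q ≤ S.max' (h1 S hS)
  · refine ⟨S, hS, fun t ht => ?_⟩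
    rw [Finset.mem_Icc] at ht
    exact h3 S hS p hpS _ (S.max'_mem _) t ht.1 (le_trans ht.2 hqe)
  · exfalso
    push_neg at hqe
    set e := S.max' (h1 S hS) with he
    have hue : p ≤ e := S.le_max' p hpS
    have heq : e < q := hqe
    have hq1 : (e:ℕ)+1 < n := lt_of_le_of_lt (Nat.succ_le_of_lt (Fin.lt_def.1 heq)) q.isLt
    set u' : Fin n := ⟨(e:ℕ)+1, hq1⟩ with hu'
    have hu'q : u' ≤ q := by rw [Fin.le_def]; exact Nat.succ_le_of_lt (Fin.lt_def.1 heq)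
    obtain ⟨S', hS'mem, _⟩ := h2 u'
    obtain ⟨hS'D, hu'S'⟩ := hS'mem
    have hminS' : (e:ℕ) < ((S'.min' (h1 S' hS'D)):ℕ) := by
      by_contra hcon
      push_neg at hcon
      have heS' : e ∈ S' := h3 S' hS'D _ (S'.min'_mem _) u' hu'S' e
        (by rw [Fin.le_def]; exact hcon) (by rw [Fin.le_def]; simp [hu'])
      obtain ⟨U, hU, hUuniq⟩ := h2 e
      have hSeq : S = S' := (hUuniq S ⟨hS, S.max'_mem _⟩).trans (hUuniq S' ⟨hS'D, heS'⟩).symm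
      have hle : u' ≤ e := S.le_max' u' (hSeq ▸ hu'S')
      rw [Fin.le_def] at hle
      simp [hu'] at hle
    have hSne := h1 S hS
    have hS'ne := h1 S' hS'D
    have horder : bmean x S + S.card * b < bmean x S' - S'.card * b := by
      refine h6 S hS S' hS'D ?_ _ ?_ _ ?_
      · intro aa haa cc hcc
        have l1 : aa ≤ e := S.le_max' aa haa
        have l2 : S'.min' hS'ne ≤ cc := S'.min'_le cc hcc
        rw [Fin.lt_def]
        rw [Fin.le_def] at l1 l2
        omega
      · exact Set.mem_Icc.2 ⟨lo_le_hi hb hSne, le_rfl⟩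
      · exact Set.mem_Icc.2 ⟨le_rfl, lo_le_hi hb hS'ne⟩
    obtain ⟨hsplit, hdisj⟩ := icc_split hue heq (u' := u') rfl
    have hsum : ∑ i ∈ Finset.Icc p q, x i
        = ∑ i ∈ Finset.Icc p e, x i + ∑ i ∈ Finset.Icc u' q, x i := by
      rw [hsplit, Finset.sum_union hdisj]
    have hcard : (Finset.Icc p q).card = (Finset.Icc p e).card + (Finset.Icc u' q).card := by
      rw [hsplit, Finset.card_union_of_disjoint hdisj]
    have hAne : (Finset.Icc p e).Nonempty := ⟨p, Finset.mem_Icc.2 ⟨le_rfl, hue⟩⟩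
    have hCne : (Finset.Icc u' q).Nonempty := ⟨u', Finset.mem_Icc.2 ⟨le_rfl, hu'q⟩⟩
    have hsubA := h4 S hS p hpS e (S.max'_mem _) hue
    have hA := (Set.Icc_subset_Icc_iff (lo_le_hi hb hAne)).1 hsubA
    have hC_lo : bmean x S' - S'.card * b
        ≤ bmean x (Finset.Icc u' q) - (Finset.Icc u' q).card * b :=
      lemP hb ⟨h1, h2, h3, h4, h5, h6⟩ ((q:ℕ) - (u':ℕ)) u' q hu'q le_rfl S' hS'D hu'S'
    have hchain : (∑ i ∈ Finset.Icc p e, x i)/((Finset.Icc p e).card : ℝ)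
          + (Finset.Icc p e).card * b
        < (∑ i ∈ Finset.Icc u' q, x i)/((Finset.Icc u' q).card : ℝ)
          - (Finset.Icc u' q).card * b := by
      have := lt_of_le_of_lt hA.2 (lt_of_lt_of_le horder hC_lo)
      simpa [bmean] using this
    have hcomb := comb1 hb (card_pos_cast hAne) (card_pos_cast hCne) hchain
    -- touching from hW : lo (Icc p q) ≤ lo (Icc p e)
    have htouch := (Set.Icc_subset_Icc_iff (lo_le_hi hb hAne)).1
      (hW p e le_rfl hue (le_of_lt heq))
    have hrw : bmean x (Finset.Icc p q) - (Finset.Icc p q).card * b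
        = (∑ i ∈ Finset.Icc p e, x i + ∑ i ∈ Finset.Icc u' q, x i)
            / (((Finset.Icc p e).card : ℝ) + ((Finset.Icc u' q).card : ℝ))
          - (((Finset.Icc p e).card : ℝ) + ((Finset.Icc u' q).card : ℝ)) * b := by
      rw [bmean, hsum, hcard]
      push_cast
      ring_nf
    have hlt : bmean x (Finset.Icc p e) - (Finset.Icc p e).card * b
        < bmean x (Finset.Icc p q) - (Finset.Icc p q).card * b := by
      rw [hrw]
      simpa [bmean] using hcomb
    exact absurd htouch.1 (by linarith)
end Helpers
/-- The covering lemma: for stop points `-1 ≤ a 0 < a 1 < ... < a n ≤ 1` with gaps `> 2b`,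
every `n`-point multiset in `ℝ` (sorted as a monotone tuple `x`) lies in some `U_{k,n-k}`:
there is `k ≤ n` such that `a k` is not covered by any box of the box decomposition of `x`
and exactly `k` of the points lie to the left of `a k`. -/
theorem box_opens_cover {n : ℕ} (b : ℝ) (hb : 0 < b) (a : ℕ → ℝ)
    (ha0 : -1 ≤ a 0) (han : a n ≤ 1)
    (hgap : ∀ i, i < n → a i + 2 * b < a (i + 1))
    (x : Fin n → ℝ) (hx : Monotone x) :
    ∃ k ≤ n, ∀ D : Finset (Finset (Fin n)), IsBoxDecomp b x D →
      (∀ S ∈ D, a k ∉ bbox b x S) ∧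
      (Finset.univ.filter fun i => x i < a k).card = k := by
  classical
  have hgap' : ∀ i, i < n → a i + 2*b < a (i+1) := by
    intro i hi; have := hgap i hi; linarith
  by_cases hex : ∃ D₀, IsBoxDecomp b x D₀
  · obtain ⟨D₀, hD₀⟩ := hex
    set c : ℕ → ℕ := fun k => (Finset.univ.filter fun i => x i < a k).card with hc
    -- box one-side lemmas
    have boxIoi : ∀ {k t : ℕ} {S : Finset (Fin n)}, S ∈ D₀ → a t ∈ bbox b x S →
        a k ∉ bbox b x S → a k < a t → ∀ u ∈ bbox b x S, a k < u := by
      intro k t S hS hmem hnot hlt u hu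
      rw [bbox, Set.mem_Icc] at hmem hu
      by_contra hcon
      push_neg at hcon
      exact hnot (Set.mem_Icc.2 ⟨le_trans hu.1 hcon, le_trans (le_of_lt hlt) hmem.2⟩)
    have boxIio : ∀ {k t : ℕ} {S : Finset (Fin n)}, S ∈ D₀ → a t ∈ bbox b x S →
        a k ∉ bbox b x S → a t < a k → ∀ u ∈ bbox b x S, u < a k := by
      intro k t S hS hmem hnot hlt u hu
      rw [bbox, Set.mem_Icc] at hmem hu
      by_contra hcon
      push_neg at hcon
      exact hnot (Set.mem_Icc.2 ⟨le_trans hmem.1 (le_of_lt hlt), le_trans hcon hu.2⟩)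
    set Unc : Finset ℕ := (Finset.range (n+1)).filter
      (fun k => ∀ S ∈ D₀, a k ∉ bbox b x S) with hUnc
    have hcovered : ∀ t ∈ Finset.range (n+1), t ∉ Unc → ∃ S ∈ D₀, a t ∈ bbox b x S := by
      intro t ht htU
      rw [hUnc, Finset.mem_filter] at htU
      push_neg at htU
      obtain ⟨S, hS1, hS2⟩ := htU ht
      exact ⟨S, hS1, hS2⟩
    have hUncNe : Unc.Nonempty := by
      by_contra hcon
      rw [Finset.not_nonempty_iff_eq_empty] at hcon
      have hall : ∀ t ∈ Finset.range (n+1), ∃ S ∈ D₀, a t ∈ bbox b x S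
          ∧ ∀ u ∈ bbox b x S, True := by
        intro t ht
        obtain ⟨S, h1, h2⟩ := hcovered t ht (by rw [hcon]; exact Finset.notMem_empty t)
        exact ⟨S, h1, h2, fun _ _ => trivial⟩
      have hle := cnt hb hgap' hD₀ (fun _ => True) (Finset.range (n+1)) subset_rfl hall
        Finset.univ (fun i _ => Finset.mem_univ i)
      rw [Finset.card_range, Finset.card_univ, Fintype.card_fin] at hle
      omega
    -- least uncovered is in K
    set K : Finset ℕ := (Finset.range (n+1)).filter
      (fun k => (∀ S ∈ D₀, a k ∉ bbox b x S) ∧ k ≤ c k) with hK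
    have hKNe : K.Nonempty := by
      set k₁ := Unc.min' hUncNe with hk₁
      have hmem := Finset.mem_filter.1 (Unc.min'_mem hUncNe)
      have hmem1 : k₁ < n + 1 := Finset.mem_range.1 hmem.1
      have hmem2 := hmem.2
      have hG2 : k₁ ≤ c k₁ := by
        have hcov : ∀ t ∈ Finset.range k₁, ∃ S ∈ D₀, a t ∈ bbox b x S
            ∧ ∀ u ∈ bbox b x S, u < a k₁ := by
          intro t ht
          rw [Finset.mem_range] at ht
          have htn : t ∈ Finset.range (n+1) := Finset.mem_range.2 (by omega)
          have htU : t ∉ Unc := fun hmem' => absurd (Unc.min'_le t hmem') (by omega)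
          obtain ⟨S, hS1, hS2⟩ := hcovered t htn htU
          have hnot : a k₁ ∉ bbox b x S := hmem2 S hS1
          have hlt : a t < a k₁ := amono hb hgap' ht (by omega)
          exact ⟨S, hS1, hS2, boxIio hS1 hS2 hnot hlt⟩
        have hle := cnt hb hgap' hD₀ (fun u => u < a k₁) (Finset.range k₁)
          (fun t ht => Finset.mem_range.2 (by have := Finset.mem_range.1 ht; omega)) hcov
          (Finset.univ.filter fun i => x i < a k₁)
          (fun i hPi => Finset.mem_filter.2 ⟨Finset.mem_univ i, hPi⟩)
        rw [Finset.card_range] at hle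
        exact hle
      exact ⟨k₁, Finset.mem_filter.2 ⟨Finset.mem_range.2 (by omega), hmem2, hG2⟩⟩
    set k := K.max' hKNe with hk
    have hkK := Finset.mem_filter.1 (K.max'_mem hKNe)
    have hkn : k < n + 1 := Finset.mem_range.1 hkK.1
    have hkunc := hkK.2.1
    have hkle : k ≤ c k := hkK.2.2
    have hkge : c k ≤ k := by
      set M := Unc.filter (fun m => k < m) with hM
      rcases M.eq_empty_or_nonempty with hMe | hMne
      · -- case A : k is the greatest uncovered
        have hcov : ∀ t ∈ Finset.Icc (k+1) n, ∃ S ∈ D₀, a t ∈ bbox b x S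
            ∧ ∀ u ∈ bbox b x S, a k < u := by
          intro t ht
          rw [Finset.mem_Icc] at ht
          have htn : t ∈ Finset.range (n+1) := Finset.mem_range.2 (by omega)
          have htU : t ∉ Unc := by
            intro hmem'
            have : t ∈ M := Finset.mem_filter.2 ⟨hmem', by omega⟩
            rw [hMe] at this
            exact Finset.notMem_empty t this
          obtain ⟨S, hS1, hS2⟩ := hcovered t htn htU
          have hnot : a k ∉ bbox b x S := hkunc S hS1
          have hlt : a k < a t := amono hb hgap' (by omega) ht.2
          exact ⟨S, hS1, hS2, boxIoi hS1 hS2 hnot hlt⟩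
        have hle' := cnt hb hgap' hD₀ (fun u => a k < u) (Finset.Icc (k+1) n)
          (fun t ht => Finset.mem_range.2 (by have := (Finset.mem_Icc.1 ht).2; omega)) hcov
          (Finset.univ.filter fun i => a k < x i)
          (fun i hPi => Finset.mem_filter.2 ⟨Finset.mem_univ i, hPi⟩)
        rw [Nat.card_Icc] at hle'
        have hdisj2 : Disjoint (Finset.univ.filter fun i => x i < a k)
            (Finset.univ.filter fun i => a k < x i) := by
          rw [Finset.disjoint_left]
          intro i h1 h2
          rw [Finset.mem_filter] at h1 h2
          linarith [h1.2, h2.2]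
        have hcards := Finset.card_union_of_disjoint hdisj2
        have hsub : (Finset.univ.filter fun i => x i < a k)
            ∪ (Finset.univ.filter fun i => a k < x i) ⊆ Finset.univ := Finset.subset_univ _
        have := Finset.card_le_card hsub
        rw [hcards, Finset.card_univ, Fintype.card_fin] at this
        have hck : c k = (Finset.univ.filter fun i => x i < a k).card := rfl
        omega
      · -- case B : m = least uncovered above k
        set m := M.min' hMne with hm
        have hmM := Finset.mem_filter.1 (M.min'_mem hMne)
        obtain ⟨hmU, hkm⟩ := hmM
        have hmU' := Finset.mem_filter.1 hmU
        have hmn : m < n + 1 := Finset.mem_range.1 hmU'.1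
        have hmunc := hmU'.2
        have hcm : c m < m := by
          by_contra hcon
          push_neg at hcon
          have : m ∈ K := Finset.mem_filter.2 ⟨Finset.mem_range.2 hmn, hmunc, hcon⟩
          have := K.le_max' m this
          omega
        have hcov : ∀ t ∈ Finset.Icc (k+1) (m-1), ∃ S ∈ D₀, a t ∈ bbox b x S
            ∧ ∀ u ∈ bbox b x S, a k < u ∧ u < a m := by
          intro t ht
          rw [Finset.mem_Icc] at ht
          have htm : t < m := by omega
          have htn : t ∈ Finset.range (n+1) := Finset.mem_range.2 (by omega)
          have htU : t ∉ Unc := by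
            intro hmem'
            have : t ∈ M := Finset.mem_filter.2 ⟨hmem', by omega⟩
            have := M.min'_le t this
            omega
          obtain ⟨S, hS1, hS2⟩ := hcovered t htn htU
          have hnot1 : a k ∉ bbox b x S := hkunc S hS1
          have hnot2 : a m ∉ bbox b x S := hmunc S hS1
          have hlt1 : a k < a t := amono hb hgap' (by omega) (by omega)
          have hlt2 : a t < a m := amono hb hgap' htm (by omega)
          exact ⟨S, hS1, hS2, fun u hu =>
            ⟨boxIoi hS1 hS2 hnot1 hlt1 u hu, boxIio hS1 hS2 hnot2 hlt2 u hu⟩⟩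
        have hle' := cnt hb hgap' hD₀ (fun u => a k < u ∧ u < a m) (Finset.Icc (k+1) (m-1))
          (fun t ht => Finset.mem_range.2 (by have := (Finset.mem_Icc.1 ht).2; omega)) hcov
          (Finset.univ.filter fun i => a k < x i ∧ x i < a m)
          (fun i hPi => Finset.mem_filter.2 ⟨Finset.mem_univ i, hPi⟩)
        rw [Nat.card_Icc] at hle'
        have hdisj2 : Disjoint (Finset.univ.filter fun i => x i < a k)
            (Finset.univ.filter fun i => a k < x i ∧ x i < a m) := by
          rw [Finset.disjoint_left]
          intro i h1 h2
          rw [Finset.mem_filter] at h1 h2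
          linarith [h1.2, h2.2.1]
        have hsub : (Finset.univ.filter fun i => x i < a k)
            ∪ (Finset.univ.filter fun i => a k < x i ∧ x i < a m)
            ⊆ (Finset.univ.filter fun i => x i < a m) := by
          intro i hi
          rw [Finset.mem_union, Finset.mem_filter, Finset.mem_filter] at hi
          rw [Finset.mem_filter]
          have hkm' : a k < a m := amono hb hgap' hkm (by omega)
          rcases hi with h | h
          · exact ⟨h.1, lt_trans h.2 hkm'⟩
          · exact ⟨h.1, h.2.2⟩
        have hcards := Finset.card_union_of_disjoint hdisj2
        have hle2 := Finset.card_le_card hsub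
        rw [hcards] at hle2
        have hck : c k = (Finset.univ.filter fun i => x i < a k).card := rfl
        have hcm' : c m = (Finset.univ.filter fun i => x i < a m).card := rfl
        omega
    -- final assembly
    refine ⟨k, by omega, fun D hD => ⟨?_, le_antisymm hkge hkle⟩⟩
    intro S hSD hmem
    have hSne := hD.1 S hSD
    set p := S.min' hSne with hp
    set q := S.max' hSne with hq
    have hpq : p ≤ q := S.min'_le q (S.max'_mem hSne)
    have hSeq : S = Finset.Icc p q := by
      ext t
      rw [Finset.mem_Icc]
      constructor
      · exact fun ht => ⟨S.min'_le t ht, S.le_max' t ht⟩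
      · rintro ⟨ht1, ht2⟩
        exact hD.2.2.1 S hSD p (S.min'_mem hSne) q (S.max'_mem hSne) t ht1 ht2
    have hW : ∀ p' q' : Fin n, p ≤ p' → p' ≤ q' → q' ≤ q →
        bbox b x (Finset.Icc p' q') ⊆ bbox b x (Finset.Icc p q) := by
      intro p' q' hh1 hh2 hh3
      have hp' : p' ∈ S := hD.2.2.1 S hSD p (S.min'_mem hSne) q (S.max'_mem hSne) p' hh1
        (le_trans hh2 hh3)
      have hq' : q' ∈ S := hD.2.2.1 S hSD p (S.min'_mem hSne) q (S.max'_mem hSne) q' 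
        (le_trans hh1 hh2) hh3
      have := hD.2.2.2.1 S hSD p' hp' q' hq' hh2
      rwa [← hSeq]
    obtain ⟨S₀, hS₀, hsub⟩ := lemL hb hD₀ hpq hW
    have hpS₀ : p ∈ S₀ := hsub (Finset.mem_Icc.2 ⟨le_rfl, hpq⟩)
    have hqS₀ : q ∈ S₀ := hsub (Finset.mem_Icc.2 ⟨hpq, le_rfl⟩)
    have hbsub : bbox b x S ⊆ bbox b x S₀ := by
      rw [hSeq]
      exact hD₀.2.2.2.1 S₀ hS₀ p hpS₀ q hqS₀ hpq
    exact hkunc S₀ hS₀ (hbsub hmem)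
  · exact ⟨0, Nat.zero_le n, fun D hD => absurd ⟨D, hD⟩ hex⟩
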